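/- Let L be a latin square of order n and let C be a critical set of L. Then for every subset D ⊆ C, the number of trades T ∈ T_L containing at least one entry of D is at least |D| (Hall's condition for the family of sets S_c = { T ∈ T_L : c ∈ T }, c ∈ C). -/
import Mathlib


/-- A triple (row, column, entry) with all coordinates in `{0, …, n-1}`. -/
abbrev Triple (n : ℕ) := Fin n × Fin n × Fin n

/-- A partial latin square of order `n`: no two distinct triples agree in two coordinates. -/
def IsPLS {n : ℕ} (P : Finset (Triple n)) : Prop :=
  ∀ a ∈ P, ∀ b ∈ P,
    ((a.1 = b.1 ∧ a.2.1 = b.2.1) ∨ (a.1 = b.1 ∧ a.2.2 = b.2.2) ∨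
      (a.2.1 = b.2.1 ∧ a.2.2 = b.2.2)) → a = b

/-- A latin square of order `n`: a partial latin square with every cell filled. -/
def IsLS {n : ℕ} (L : Finset (Triple n)) : Prop :=
  IsPLS L ∧ ∀ r c : Fin n, ∃ e : Fin n, (r, c, e) ∈ L

/-- Condition (R2): for every triple of `T₁` and every pair of coordinates,
there is a unique triple of `T₂` agreeing with it in those two coordinates.
(Condition (R3) is `R2cond T₂ T₁`.) -/
def R2cond {n : ℕ} (T₁ T₂ : Finset (Triple n)) : Prop :=
  ∀ a ∈ T₁,
    (∃! b, b ∈ T₂ ∧ b.1 = a.1 ∧ b.2.1 = a.2.1) ∧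
    (∃! b, b ∈ T₂ ∧ b.1 = a.1 ∧ b.2.2 = a.2.2) ∧
    (∃! b, b ∈ T₂ ∧ b.2.1 = a.2.1 ∧ b.2.2 = a.2.2)

/-- A latin bitrade `(T₁, T₂)`: a pair of partial latin squares satisfying
(R1) disjointness, (R2) and (R3). -/
def IsBitrade {n : ℕ} (T₁ T₂ : Finset (Triple n)) : Prop :=
  IsPLS T₁ ∧ IsPLS T₂ ∧ T₁ ∩ T₂ = ∅ ∧ R2cond T₁ T₂ ∧ R2cond T₂ T₁

/-- The trade space of `L`: nonempty subsets `T ⊆ L` forming a bitrade with some disjoint mate. -/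
def TradeSpace {n : ℕ} (L : Finset (Triple n)) : Set (Finset (Triple n)) :=
  { T | T.Nonempty ∧ T ⊆ L ∧ ∃ T₂, IsBitrade T T₂ }

/-- `P` has unique completion to `L`: `L` is the only latin square of order `n` containing `P`. -/
def UniquelyCompletes {n : ℕ} (P L : Finset (Triple n)) : Prop :=
  ∀ L', IsLS L' → P ⊆ L' → L' = L

/-- A critical set of `L`: a subset with unique completion to `L`, minimal with this property. -/
def IsCriticalSet {n : ℕ} (C L : Finset (Triple n)) : Prop :=
  C ⊆ L ∧ UniquelyCompletes C L ∧ ∀ C' ⊂ C, ¬ UniquelyCompletes C' L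

/-- A face of the simplicial complex `Δ(L)`: a finite nonempty collection of trades of `L`
sharing a common triple. -/
def IsFace {n : ℕ} (L : Finset (Triple n)) (F : Finset (Finset (Triple n))) : Prop :=
  F.Nonempty ∧ (∀ T ∈ F, T ∈ TradeSpace L) ∧ ∃ x : Triple n, ∀ T ∈ F, x ∈ T

/-- A facet of `Δ(L)`: a face maximal under inclusion. -/
def IsFacet {n : ℕ} (L : Finset (Triple n)) (F : Finset (Finset (Triple n))) : Prop :=
  IsFace L F ∧ ∀ F', IsFace L F' → F ⊆ F' → F' = F

/-- A vertex cover of `Δ(L)`: a set `A` of trades of `L` such that every facet is adjacent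
to some `a ∈ A` (i.e. some member of the facet meets `a`). -/
def IsVertexCover {n : ℕ} (L : Finset (Triple n)) (A : Finset (Finset (Triple n))) : Prop :=
  (∀ a ∈ A, a ∈ TradeSpace L) ∧
  ∀ F, IsFacet L F → ∃ a ∈ A, ∃ T ∈ F, (T ∩ a).Nonempty

/-- A minimal vertex cover of `Δ(L)`. -/
def IsMinimalVertexCover {n : ℕ} (L : Finset (Triple n))
    (A : Finset (Finset (Triple n))) : Prop :=
  IsVertexCover L A ∧ ∀ A' ⊂ A, ¬ IsVertexCover L A'

lemma ls_row_surj {n : ℕ} {L : Finset (Triple n)} (h : IsLS L) (r e : Fin n) :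
    ∃ c, (r, c, e) ∈ L := by
  have hf : ∀ c : Fin n, ∃ e, (r, c, e) ∈ L := fun c => h.2 r c
  choose f hf using hf
  have hinj : Function.Injective f := by
    intro c c' hcc
    have := h.1 (r, c, f c) (hf c) (r, c', f c') (hf c')
      (Or.inr (Or.inl ⟨rfl, hcc⟩))
    exact congrArg (fun t : Triple n => t.2.1) this
  obtain ⟨c, hc⟩ := (Finite.injective_iff_surjective.mp hinj) e
  exact ⟨c, hc ▸ hf c⟩

lemma ls_col_surj {n : ℕ} {L : Finset (Triple n)} (h : IsLS L) (c e : Fin n) :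
    ∃ r, (r, c, e) ∈ L := by
  have hf : ∀ r : Fin n, ∃ e, (r, c, e) ∈ L := fun r => h.2 r c
  choose f hf using hf
  have hinj : Function.Injective f := by
    intro r r' hrr
    have := h.1 (r, c, f r) (hf r) (r', c, f r') (hf r')
      (Or.inr (Or.inr ⟨rfl, hrr⟩))
    exact congrArg (fun t : Triple n => t.1) this
  obtain ⟨r, hr⟩ := (Finite.injective_iff_surjective.mp hinj) e
  exact ⟨r, hr ▸ hf r⟩

lemma diff_R2 {n : ℕ} {L L' : Finset (Triple n)} (hL : IsLS L) (hL' : IsLS L') :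
    R2cond (L \ L') (L' \ L) := by
  rintro ⟨r, c, e⟩ ha
  obtain ⟨haL, haL'⟩ := Finset.mem_sdiff.mp ha
  refine ⟨?_, ?_, ?_⟩
  · obtain ⟨e', he'⟩ := hL'.2 r c
    refine ⟨(r, c, e'), ⟨Finset.mem_sdiff.mpr ⟨he', fun hb => ?_⟩, rfl, rfl⟩, ?_⟩
    · have := hL.1 _ haL _ hb (Or.inl ⟨rfl, rfl⟩)
      exact haL' (this ▸ he')
    · rintro ⟨r₁, c₁, e₁⟩ ⟨hb, h1, h2⟩
      simp only at h1 h2; subst h1; subst h2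
      exact hL'.1 _ (Finset.mem_sdiff.mp hb).1 _ he' (Or.inl ⟨rfl, rfl⟩)
  · obtain ⟨c', hc'⟩ := ls_row_surj hL' r e
    refine ⟨(r, c', e), ⟨Finset.mem_sdiff.mpr ⟨hc', fun hb => ?_⟩, rfl, rfl⟩, ?_⟩
    · have := hL.1 _ haL _ hb (Or.inr (Or.inl ⟨rfl, rfl⟩))
      exact haL' (this ▸ hc')
    · rintro ⟨r₁, c₁, e₁⟩ ⟨hb, h1, h2⟩
      simp only at h1 h2; subst h1; subst h2
      exact hL'.1 _ (Finset.mem_sdiff.mp hb).1 _ hc' (Or.inr (Or.inl ⟨rfl, rfl⟩))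
  · obtain ⟨r', hr'⟩ := ls_col_surj hL' c e
    refine ⟨(r', c, e), ⟨Finset.mem_sdiff.mpr ⟨hr', fun hb => ?_⟩, rfl, rfl⟩, ?_⟩
    · have := hL.1 _ haL _ hb (Or.inr (Or.inr ⟨rfl, rfl⟩))
      exact haL' (this ▸ hr')
    · rintro ⟨r₁, c₁, e₁⟩ ⟨hb, h1, h2⟩
      simp only at h1 h2; subst h1; subst h2
      exact hL'.1 _ (Finset.mem_sdiff.mp hb).1 _ hr' (Or.inr (Or.inr ⟨rfl, rfl⟩))

lemma diff_bitrade {n : ℕ} {L L' : Finset (Triple n)} (hL : IsLS L) (hL' : IsLS L') :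
    IsBitrade (L \ L') (L' \ L) := by
  refine ⟨?_, ?_, ?_, diff_R2 hL hL', diff_R2 hL' hL⟩
  · intro a ha b hb h
    exact hL.1 a (Finset.mem_sdiff.mp ha).1 b (Finset.mem_sdiff.mp hb).1 h
  · intro a ha b hb h
    exact hL'.1 a (Finset.mem_sdiff.mp ha).1 b (Finset.mem_sdiff.mp hb).1 h
  · ext x
    simp only [Finset.mem_inter, Finset.mem_sdiff, Finset.notMem_empty, iff_false]
    tauto

/-- Hall's condition: for every subset `D` of a critical set `C` of `L`, the number of
trades of `L` containing at least one entry of `D` is at least `|D|`. -/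
theorem critical_set_hall_condition {n : ℕ} (L C : Finset (Triple n))
    (hL : IsLS L) (hC : IsCriticalSet C L) (D : Finset (Triple n)) (hD : D ⊆ C) :
    D.card ≤ Set.ncard { T | T ∈ TradeSpace L ∧ ∃ c ∈ D, c ∈ T } := by
  classical
  set S : Set (Finset (Triple n)) := { T | T ∈ TradeSpace L ∧ ∃ c ∈ D, c ∈ T } with hS
  have hSfin : S.Finite := Set.toFinite S
  have key : ∀ c ∈ D, ∃ T, T ∈ S ∧ c ∈ T ∧ ∀ d ∈ D, d ∈ T → d = c := by
    intro c hc
    have hcC : c ∈ C := hD hc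
    have hnotUC : ¬ UniquelyCompletes (C.erase c) L :=
      hC.2.2 _ (Finset.erase_ssubset hcC)
    simp only [UniquelyCompletes, not_forall] at hnotUC
    obtain ⟨L', hL', hsub, hne⟩ := hnotUC
    have hcL' : c ∉ L' := by
      intro h
      apply hne
      apply hC.2.1 L' hL'
      intro x hx
      rcases eq_or_ne x c with rfl | hxc
      · exact h
      · exact hsub (Finset.mem_erase.mpr ⟨hxc, hx⟩)
    have hcT : c ∈ L \ L' := Finset.mem_sdiff.mpr ⟨hC.1 hcC, hcL'⟩
    refine ⟨L \ L', ⟨⟨⟨c, hcT⟩, Finset.sdiff_subset, L' \ L, diff_bitrade hL hL'⟩,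
      c, hc, hcT⟩, hcT, ?_⟩
    intro d hdD hdT
    by_contra hdc
    exact (Finset.mem_sdiff.mp hdT).2 (hsub (Finset.mem_erase.mpr ⟨hdc, hD hdD⟩))
  choose! f hf1 hf2 hf3 using key
  have hle : Set.ncard (↑D : Set (Triple n)) ≤ S.ncard := by
    apply Set.ncard_le_ncard_of_injOn f
    · intro c hc
      exact hf1 c (Finset.mem_coe.mp hc)
    · intro c hc c' hc' hcc
      exact hf3 c' (Finset.mem_coe.mp hc') c (Finset.mem_coe.mp hc)
        (hcc ▸ hf2 c (Finset.mem_coe.mp hc))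
  simpa [Set.ncard_coe_finset] using hle
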